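/- Let (Ω, μ) be a σ-finite measure space, let 1 ≤ p ≤ q < ∞, and let T : L^p(μ) → L^q(μ) be a bounded linear operator. Let (Q_i)_{i∈ℕ} be pairwise disjoint measurable subsets of Ω whose union is Ω. For indices i, j define N_{ij} = sup { ‖1_{Q_i} · (T f)‖_{L^q} : f ∈ L^p(μ), f = 0 a.e. outside Q_j, ‖f‖_{L^p} ≤ 1 } (the operator norm of χ_{Q_i} T χ_{Q_j}). Then the operator norm of T satisfies ‖T‖_{L^p → L^q} ≤ sup_j ∑_i N_{ij} + sup_i ∑_j N_{ij} (the inequality being interpreted in [0,∞]). -/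

import Mathlib

open MeasureTheory
open scoped ENNReal

private lemma aux_coe_nnnorm {Ω : Type*} [MeasurableSpace Ω] {μ : Measure Ω} {r : ℝ≥0∞}
    (h : Lp ℂ r μ) : (‖h‖₊ : ℝ≥0∞) = eLpNorm h r μ := by
  rw [Lp.nnnorm_def, ENNReal.coe_toNNReal (Lp.eLpNorm_ne_top _)]

private lemma aux_ind {Ω : Type*} [MeasurableSpace Ω] {μ : Measure Ω} {s : Set Ω}
    (hs : MeasurableSet s) {r : ℝ≥0∞} (hr0 : r ≠ 0) (hrt : r ≠ ∞) (g : Ω → ℂ) :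
    eLpNorm (s.indicator g) r μ
      = (∫⁻ x in s, (‖g x‖₊ : ℝ≥0∞) ^ r.toReal ∂μ) ^ (1 / r.toReal) := by
  have hrpos : 0 < r.toReal := ENNReal.toReal_pos hr0 hrt
  rw [eLpNorm_eq_lintegral_rpow_enorm_toReal hr0 hrt, ← lintegral_indicator hs]
  congr 1
  refine lintegral_congr fun x => ?_
  by_cases hx : x ∈ s
  · simp [hx, enorm_eq_nnnorm]
  · simp [hx, ENNReal.zero_rpow_of_pos hrpos]

private lemma aux_partition {Ω : Type*} [MeasurableSpace Ω] (μ : Measure Ω)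
    (Q : ℕ → Set Ω) (hQmeas : ∀ i, MeasurableSet (Q i))
    (hQdisj : Pairwise (Function.onFun Disjoint Q))
    (hQcover : (⋃ i, Q i) = Set.univ)
    {r : ℝ≥0∞} (hr0 : r ≠ 0) (hrt : r ≠ ∞) (g : Ω → ℂ) :
    eLpNorm g r μ ^ r.toReal = ∑' i, eLpNorm ((Q i).indicator g) r μ ^ r.toReal := by
  have hrpos : 0 < r.toReal := ENNReal.toReal_pos hr0 hrt
  have key : ∀ (h : Ω → ℂ), eLpNorm h r μ ^ r.toReal = ∫⁻ x, (‖h x‖₊ : ℝ≥0∞) ^ r.toReal ∂μ := by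
    intro h
    rw [eLpNorm_eq_lintegral_rpow_enorm_toReal hr0 hrt, ← ENNReal.rpow_mul, one_div,
      inv_mul_cancel₀ hrpos.ne', ENNReal.rpow_one]
    rfl
  rw [key]
  have h2 : ∫⁻ x, (‖g x‖₊ : ℝ≥0∞) ^ r.toReal ∂μ
      = ∫⁻ x in ⋃ i, Q i, (‖g x‖₊ : ℝ≥0∞) ^ r.toReal ∂μ := by
    rw [hQcover, Measure.restrict_univ]
  rw [h2, lintegral_iUnion hQmeas hQdisj]
  refine tsum_congr fun i => ?_
  rw [key, ← lintegral_indicator (hQmeas i)]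
  refine lintegral_congr fun x => ?_
  by_cases hx : x ∈ Q i
  · simp [hx]
  · simp [hx, ENNReal.zero_rpow_of_pos hrpos]

private lemma aux_rpow_sub_one_mul {t : ℝ} (ht : 1 ≤ t) (x : ℝ≥0∞) : x ^ (t - 1) * x = x ^ t := by
  have htpos : 0 < t := lt_of_lt_of_le zero_lt_one ht
  rcases eq_or_ne x 0 with rfl | h0
  · simp [ENNReal.zero_rpow_of_pos htpos]
  rcases eq_or_ne x ∞ with rfl | htop
  · rcases eq_or_lt_of_le ht with h1 | h1
    · simp [← h1]
    · rw [ENNReal.top_rpow_of_pos htpos, ENNReal.top_rpow_of_pos (by linarith : (0:ℝ) < t - 1),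
        ENNReal.top_mul_top]
  · nth_rewrite 2 [← ENNReal.rpow_one x]
    rw [← ENNReal.rpow_add _ _ h0 htop]
    norm_num

private lemma aux_lp_mono {t : ℝ} (ht : 1 ≤ t) (y : ℕ → ℝ≥0∞) :
    ∑' j, y j ^ t ≤ (∑' j, y j) ^ t := by
  calc ∑' j, y j ^ t ≤ ∑' j, (∑' k, y k) ^ (t - 1) * y j := by
        refine ENNReal.tsum_le_tsum fun j => ?_
        rw [← aux_rpow_sub_one_mul ht (y j)]
        exact mul_le_mul_left (ENNReal.rpow_le_rpow (ENNReal.le_tsum j) (by linarith)) _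
    _ = (∑' k, y k) ^ (t - 1) * ∑' j, y j := ENNReal.tsum_mul_left
    _ = (∑' j, y j) ^ t := aux_rpow_sub_one_mul ht _

private lemma aux_holder {r : ℝ} (hr : 1 ≤ r) (w a : ℕ → ℝ≥0∞) :
    (∑' j, w j * a j) ^ r ≤ (∑' j, w j) ^ (r - 1) * ∑' j, w j * a j ^ r := by
  rcases eq_or_lt_of_le hr with hr1 | hr1
  · rw [← hr1]
    simp
  · have hconj : r.HolderConjugate (r / (r - 1)) := Real.HolderConjugate.conjExponent hr1
    set s : ℝ := r / (r - 1) with hs_def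
    have hrpos : 0 < r := hconj.pos
    have hspos : 0 < s := hconj.symm.pos
    have hinv : 1 / s + 1 / r = 1 := by
      rw [one_div, one_div, add_comm]; exact hconj.inv_add_inv_eq_one
    have key : ∑' j, w j * a j ≤ (∑' j, w j) ^ (1/s) * (∑' j, w j * a j ^ r) ^ (1/r) := by
      have hH := ENNReal.lintegral_mul_le_Lp_mul_Lq (Measure.count : Measure ℕ)
        hconj.symm (f := fun j => w j ^ (1/s)) (g := fun j => w j ^ (1/r) * a j)
        ((measurable_of_countable _).aemeasurable) ((measurable_of_countable _).aemeasurable)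
      simp only [Pi.mul_apply, lintegral_count] at hH
      have h1 : ∀ j, w j ^ (1/s) * (w j ^ (1/r) * a j) = w j * a j := by
        intro j
        rcases eq_or_ne (w j) 0 with h0 | h0
        · simp only [h0, ENNReal.zero_rpow_of_pos (by positivity : (0:ℝ) < 1/s), zero_mul]
        rcases eq_or_ne (w j) ∞ with htop | htop
        · rcases eq_or_ne (a j) 0 with ha | ha
          · simp [htop, ha]
          · rw [htop, ENNReal.top_rpow_of_pos (by positivity : (0:ℝ) < 1/s),
              ENNReal.top_rpow_of_pos (by positivity : (0:ℝ) < 1/r), ENNReal.top_mul ha,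
              ENNReal.top_mul_top]
        · rw [← mul_assoc, ← ENNReal.rpow_add _ _ h0 htop, hinv, ENNReal.rpow_one]
      have h2 : ∀ j, (w j ^ (1/s)) ^ s = w j := by
        intro j
        rw [← ENNReal.rpow_mul, one_div, inv_mul_cancel₀ hspos.ne', ENNReal.rpow_one]
      have h3 : ∀ j, (w j ^ (1/r) * a j) ^ r = w j * a j ^ r := by
        intro j
        rw [ENNReal.mul_rpow_of_nonneg _ _ hrpos.le, ← ENNReal.rpow_mul, one_div,
          inv_mul_cancel₀ hrpos.ne', ENNReal.rpow_one]
      simp only [h1, h2, h3] at hH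
      exact hH
    calc (∑' j, w j * a j) ^ r
        ≤ ((∑' j, w j) ^ (1/s) * (∑' j, w j * a j ^ r) ^ (1/r)) ^ r :=
          ENNReal.rpow_le_rpow key hrpos.le
      _ = (∑' j, w j) ^ (r - 1) * ∑' j, w j * a j ^ r := by
          rw [ENNReal.mul_rpow_of_nonneg _ _ hrpos.le, ← ENNReal.rpow_mul, ← ENNReal.rpow_mul]
          congr 1
          · congr 1
            rw [hs_def, one_div_div, div_mul_cancel₀ _ hrpos.ne']
          · rw [one_div, inv_mul_cancel₀ hrpos.ne', ENNReal.rpow_one]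

private lemma aux_coeFn_sum {Ω : Type*} [MeasurableSpace Ω] {μ : Measure Ω} {r : ℝ≥0∞}
    (F : ℕ → Lp ℂ r μ) (s : Finset ℕ) :
    ⇑(∑ j ∈ s, F j) =ᵐ[μ] fun x => ∑ j ∈ s, F j x := by
  classical
  induction s using Finset.induction with
  | empty =>
      simp only [Finset.sum_empty]; exact (Lp.coeFn_zero (E := ℂ) (p := r) (μ := μ))
  | @insert a s ha ih =>
      rw [Finset.sum_insert ha]
      filter_upwards [Lp.coeFn_add (F a) (∑ j ∈ s, F j), ih] with x hx1 hx2
      rw [hx1, Pi.add_apply, hx2]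
      simp [Finset.sum_insert ha]

set_option maxHeartbeats 1000000 in
/-- Criterion for the `L^p → L^q` operator norm in terms of localizations to a
countable measurable partition:
`‖T‖ ≤ sup_j ∑_i N_{ij} + sup_i ∑_j N_{ij}`. -/
theorem stmt_17 {Ω : Type*} [MeasurableSpace Ω] (μ : Measure Ω) [SigmaFinite μ]
    (p q : ℝ≥0∞) [Fact (1 ≤ p)] [Fact (1 ≤ q)] (hpq : p ≤ q) (hq : q ≠ ⊤)
    (T : Lp ℂ p μ →L[ℂ] Lp ℂ q μ)
    (Q : ℕ → Set Ω) (hQmeas : ∀ i, MeasurableSet (Q i))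
    (hQdisj : Pairwise (Function.onFun Disjoint Q))
    (hQcover : (⋃ i, Q i) = Set.univ)
    (N : ℕ → ℕ → ℝ≥0∞)
    (hN : ∀ i j, N i j =
      ⨆ f ∈ {f : Lp ℂ p μ | (∀ᵐ z ∂μ, z ∉ Q j → f z = 0) ∧ ‖f‖ ≤ 1},
        eLpNorm ((Q i).indicator (⇑(T f))) q μ) :
    (‖T‖₊ : ℝ≥0∞) ≤ (⨆ j, ∑' i, N i j) + ⨆ i, ∑' j, N i j := by
  classical
  have hp1 : (1:ℝ≥0∞) ≤ p := Fact.out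
  have hq1 : (1:ℝ≥0∞) ≤ q := Fact.out
  have hp0 : p ≠ 0 := (lt_of_lt_of_le zero_lt_one hp1).ne'
  have hq0 : q ≠ 0 := (lt_of_lt_of_le zero_lt_one hq1).ne'
  have hptop : p ≠ ∞ := fun h => hq (top_le_iff.mp (h ▸ hpq))
  have hpt1 : 1 ≤ p.toReal := by
    rw [← ENNReal.toReal_one]; exact ENNReal.toReal_mono hptop hp1
  have hqt1 : 1 ≤ q.toReal := by
    rw [← ENNReal.toReal_one]; exact ENNReal.toReal_mono hq hq1
  have hpqt : p.toReal ≤ q.toReal := ENNReal.toReal_mono hq hpq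
  have hptpos : 0 < p.toReal := lt_of_lt_of_le zero_lt_one hpt1
  have hqtpos : 0 < q.toReal := lt_of_lt_of_le zero_lt_one hqt1
  set A := ⨆ j, ∑' i, N i j with hA
  set B := ⨆ i, ∑' j, N i j with hB
  rcases eq_or_ne (A + B) ∞ with hAB | hAB
  · exact hAB ▸ le_top
  have core : ∀ f : Lp ℂ p μ, (‖T f‖₊ : ℝ≥0∞) ≤ (A + B) * (‖f‖₊ : ℝ≥0∞) := by
    intro f
    set F : ℕ → Lp ℂ p μ :=
      fun j => ((Lp.memLp f).indicator (hQmeas j)).toLp ((Q j).indicator ⇑f) with hFdef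
    have hFcoe : ∀ j, ⇑(F j) =ᵐ[μ] (Q j).indicator ⇑f := fun j => MemLp.coeFn_toLp _
    set a : ℕ → ℝ≥0∞ := fun j => eLpNorm ((Q j).indicator ⇑f) p μ with hadef
    have haF : ∀ j, (‖F j‖₊ : ℝ≥0∞) = a j := fun j => by
      rw [aux_coe_nnnorm, eLpNorm_congr_ae (hFcoe j)]
    -- the localized bound
    have hloc : ∀ i j, eLpNorm ((Q i).indicator ⇑(T (F j))) q μ ≤ N i j * a j := by
      intro i j
      rcases eq_or_ne (a j) 0 with h0 | h0
      · have hF0 : F j = 0 := by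
          have h1 : (‖F j‖₊ : ℝ≥0∞) = 0 := by rw [haF j, h0]
          have h2 : ‖F j‖₊ = 0 := by exact_mod_cast h1
          simpa using nnnorm_eq_zero.mp h2
        rw [hF0, map_zero, h0, mul_zero]
        have hz : (Q i).indicator ⇑(0 : Lp ℂ q μ) =ᵐ[μ] (fun _ => (0:ℂ)) := by
          filter_upwards [Lp.coeFn_zero (E := ℂ) (p := q) (μ := μ)] with x hx
          by_cases hxi : x ∈ Q i
          · rw [Set.indicator_of_mem hxi, hx]; rfl
          · rw [Set.indicator_of_notMem hxi]
        rw [eLpNorm_congr_ae hz]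
        simp
      · have hFnn : ‖F j‖₊ ≠ 0 := by
          intro h
          apply h0
          rw [← haF j, h, ENNReal.coe_zero]
        set cst : ℂ := ((‖F j‖⁻¹ : ℝ) : ℂ) with hcst
        have hFne : F j ≠ 0 := fun h => hFnn (by rw [h, nnnorm_zero])
        have hFn0 : ‖F j‖ ≠ 0 := norm_ne_zero_iff.mpr hFne
        have hcst_nn : ‖cst‖₊ = ‖F j‖₊⁻¹ := by
          rw [hcst, Complex.nnnorm_real, nnnorm_inv, nnnorm_norm]
        have hmem : (cst • F j) ∈
            {g : Lp ℂ p μ | (∀ᵐ z ∂μ, z ∉ Q j → g z = 0) ∧ ‖g‖ ≤ 1} := by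
          constructor
          · filter_upwards [Lp.coeFn_smul cst (F j), hFcoe j] with x hx1 hx2 hxQ
            rw [hx1, Pi.smul_apply, hx2, Set.indicator_of_notMem hxQ, smul_zero]
          · rw [norm_smul]
            have hc : ‖cst‖ = ‖F j‖⁻¹ := by
              rw [hcst, Complex.norm_real, Real.norm_eq_abs,
                abs_of_nonneg (inv_nonneg.mpr (norm_nonneg _))]
            rw [hc, inv_mul_cancel₀ hFn0]
        have hsup : eLpNorm ((Q i).indicator ⇑(T (cst • F j))) q μ ≤ N i j := by
          rw [hN i j]
          exact le_iSup₂ (α := ℝ≥0∞) (cst • F j) hmem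
        have hTsmul : eLpNorm ((Q i).indicator ⇑(T (cst • F j))) q μ
            = (‖cst‖₊ : ℝ≥0∞) * eLpNorm ((Q i).indicator ⇑(T (F j))) q μ := by
          rw [_root_.map_smul]
          have hc : (Q i).indicator ⇑(cst • T (F j))
              =ᵐ[μ] (cst • ((Q i).indicator ⇑(T (F j))) : Ω → ℂ) := by
            filter_upwards [Lp.coeFn_smul cst (T (F j))] with x hx
            by_cases hxi : x ∈ Q i
            · rw [Set.indicator_of_mem hxi, hx, Pi.smul_apply, Pi.smul_apply,
                Set.indicator_of_mem hxi]
            · rw [Set.indicator_of_notMem hxi, Pi.smul_apply,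
                Set.indicator_of_notMem hxi, smul_zero]
          rw [eLpNorm_congr_ae hc, eLpNorm_const_smul, enorm_eq_nnnorm]
        rw [hTsmul] at hsup
        calc eLpNorm ((Q i).indicator ⇑(T (F j))) q μ
            = a j * ((‖cst‖₊ : ℝ≥0∞) * eLpNorm ((Q i).indicator ⇑(T (F j))) q μ) := by
              rw [← mul_assoc, ← haF j, hcst_nn, ← ENNReal.coe_mul, mul_inv_cancel₀ hFnn,
                ENNReal.coe_one, one_mul]
          _ ≤ a j * N i j := mul_le_mul_right hsup _
          _ = N i j * a j := mul_comm _ _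
    -- partial sums
    set G : ℕ → Lp ℂ p μ := fun n => ∑ j ∈ Finset.range n, F j with hGdef
    set U : ℕ → Set Ω := fun n => ⋃ j ∈ Finset.range n, Q j with hUdef
    have hUmeas : ∀ n, MeasurableSet (U n) :=
      fun n => MeasurableSet.iUnion fun j => MeasurableSet.iUnion fun _ => hQmeas j
    have hFcoe_all : ∀ᵐ x ∂μ, ∀ j, F j x = (Q j).indicator ⇑f x := ae_all_iff.mpr hFcoe
    have hGcoe : ∀ n, ⇑(G n) =ᵐ[μ] fun x => ∑ j ∈ Finset.range n, (Q j).indicator ⇑f x := by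
      intro n
      refine (aux_coeFn_sum F (Finset.range n)).trans ?_
      filter_upwards [hFcoe_all] with x hx
      exact Finset.sum_congr rfl fun j _ => hx j
    have hdiff : ∀ n, ⇑(f - G n) =ᵐ[μ] (U n)ᶜ.indicator ⇑f := by
      intro n
      filter_upwards [Lp.coeFn_sub f (G n), hGcoe n] with x hx1 hx2
      rw [hx1, Pi.sub_apply, hx2]
      by_cases hxU : x ∈ U n
      · rw [Set.indicator_of_notMem (Set.notMem_compl_iff.mpr hxU)]
        obtain ⟨j₀, hj₀, hxj₀⟩ := Set.mem_iUnion₂.mp hxU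
        rw [Finset.sum_eq_single j₀]
        · rw [Set.indicator_of_mem hxj₀, sub_self]
        · intro j hj hne
          exact Set.indicator_of_notMem
            (fun hxj => Set.disjoint_left.mp (hQdisj hne) hxj hxj₀) _
        · intro h; exact absurd hj₀ h
      · rw [Set.indicator_of_mem (Set.mem_compl hxU), Finset.sum_eq_zero, sub_zero]
        intro j hj
        exact Set.indicator_of_notMem (fun hxj => hxU (Set.mem_biUnion hj hxj)) _
    have hUc : ∀ n, (U n)ᶜ = ⋃ i, Q (i + n) := by
      intro n
      ext x
      simp only [Set.mem_compl_iff, Set.mem_iUnion]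
      constructor
      · intro hx
        have hxu : x ∈ ⋃ i, Q i := hQcover ▸ Set.mem_univ x
        obtain ⟨j, hj⟩ := Set.mem_iUnion.mp hxu
        have hjn : n ≤ j := by
          by_contra hcon
          exact hx (Set.mem_biUnion (Finset.mem_range.mpr (not_le.mp hcon)) hj)
        exact ⟨j - n, by rwa [Nat.sub_add_cancel hjn]⟩
      · rintro ⟨i, hi⟩ hxU
        obtain ⟨j, hj, hxj⟩ := Set.mem_iUnion₂.mp hxU
        have hne : j ≠ i + n := by
          have := Finset.mem_range.mp hj; omega
        exact Set.disjoint_left.mp (hQdisj hne) hxj hi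
    -- norms of pieces
    have hfa : (‖f‖₊ : ℝ≥0∞) ^ p.toReal = ∑' j, a j ^ p.toReal := by
      rw [aux_coe_nnnorm]
      exact aux_partition μ Q hQmeas hQdisj hQcover hp0 hptop ⇑f
    set cc : ℕ → ℝ≥0∞ := fun i => ∫⁻ x in Q i, (‖f x‖₊ : ℝ≥0∞) ^ p.toReal ∂μ with hccdef
    have hcc_eq : ∀ i, a i ^ p.toReal = cc i := by
      intro i
      rw [hadef]
      dsimp only
      rw [aux_ind (hQmeas i) hp0 hptop, ← ENNReal.rpow_mul, one_div,
        inv_mul_cancel₀ hptpos.ne', ENNReal.rpow_one]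
    have hcsum : ∑' i, cc i ≠ ∞ := by
      have heq : ∑' i, cc i = (‖f‖₊ : ℝ≥0∞) ^ p.toReal := by
        rw [hfa]
        exact (tsum_congr fun i => hcc_eq i).symm
      rw [heq]
      exact (ENNReal.rpow_lt_top_of_nonneg hptpos.le ENNReal.coe_ne_top).ne
    have heqtail : ∀ n, (‖f - G n‖₊ : ℝ≥0∞) = (∑' i, cc (i + n)) ^ (1 / p.toReal) := by
      intro n
      rw [aux_coe_nnnorm, eLpNorm_congr_ae (hdiff n), aux_ind (hUmeas n).compl hp0 hptop]
      congr 1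
      rw [hUc n, lintegral_iUnion (fun i => hQmeas (i + n))
        (fun i k h => hQdisj (show i + n ≠ k + n by omega))]
    have heps : Filter.Tendsto (fun n => (‖f - G n‖₊ : ℝ≥0∞)) Filter.atTop (nhds 0) := by
      simp only [heqtail]
      have hcomp := ((ENNReal.continuous_rpow_const (y := 1 / p.toReal)).tendsto 0).comp
        (ENNReal.tendsto_sum_nat_add cc hcsum)
      simpa [Function.comp_def,
        ENNReal.zero_rpow_of_pos (show (0:ℝ) < p.toReal⁻¹ by positivity)] using hcomp
    -- bound for partial images
    set M : ℕ → ℝ≥0∞ := fun i => ∑' j, N i j * a j with hMdef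
    have hTGn : ∀ i n, eLpNorm ((Q i).indicator ⇑(T (G n))) q μ ≤ M i := by
      intro i n
      have hsum : T (G n) = ∑ j ∈ Finset.range n, T (F j) := by
        rw [hGdef]; exact map_sum T F (Finset.range n)
      have hcoe : ⇑(T (G n)) =ᵐ[μ] fun x => ∑ j ∈ Finset.range n, (T (F j)) x := by
        rw [hsum]; exact aux_coeFn_sum (fun j => T (F j)) (Finset.range n)
      have hind : (Q i).indicator ⇑(T (G n)) =ᵐ[μ]
          fun x => ∑ j ∈ Finset.range n, (Q i).indicator ⇑(T (F j)) x := by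
        filter_upwards [hcoe] with x hx
        by_cases hxi : x ∈ Q i
        · rw [Set.indicator_of_mem hxi, hx]
          exact Finset.sum_congr rfl fun j _ => (Set.indicator_of_mem hxi _).symm
        · rw [Set.indicator_of_notMem hxi]
          exact (Finset.sum_eq_zero fun j _ => Set.indicator_of_notMem hxi _).symm
      rw [eLpNorm_congr_ae hind]
      have hfn : (fun x => ∑ j ∈ Finset.range n, (Q i).indicator ⇑(T (F j)) x)
          = ∑ j ∈ Finset.range n, (Q i).indicator ⇑(T (F j)) :=
        funext fun x => (Finset.sum_apply x _ _).symm
      rw [hfn]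
      calc eLpNorm (∑ j ∈ Finset.range n, (Q i).indicator ⇑(T (F j))) q μ
          ≤ ∑ j ∈ Finset.range n, eLpNorm ((Q i).indicator ⇑(T (F j))) q μ :=
            eLpNorm_sum_le
              (fun j _ => (Lp.aestronglyMeasurable (T (F j))).indicator (hQmeas i)) hq1
        _ ≤ ∑ j ∈ Finset.range n, N i j * a j := Finset.sum_le_sum fun j _ => hloc i j
        _ ≤ M i := ENNReal.sum_le_tsum _
    -- limit: bound the localized image of f itself
    have hbM : ∀ i, eLpNorm ((Q i).indicator ⇑(T f)) q μ ≤ M i := by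
      intro i
      have hstep : ∀ n, eLpNorm ((Q i).indicator ⇑(T f)) q μ
          ≤ (‖T‖₊ : ℝ≥0∞) * (‖f - G n‖₊ : ℝ≥0∞) + M i := by
        intro n
        have hsplit : (Q i).indicator ⇑(T f)
            = (Q i).indicator (⇑(T f) - ⇑(T (G n))) + (Q i).indicator ⇑(T (G n)) := by
          funext x
          by_cases hxi : x ∈ Q i
          · simp [Set.indicator_of_mem hxi]
          · simp [Set.indicator_of_notMem hxi]
        have htri : eLpNorm ((Q i).indicator ⇑(T f)) q μ
            ≤ eLpNorm ((Q i).indicator (⇑(T f) - ⇑(T (G n)))) q μ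
              + eLpNorm ((Q i).indicator ⇑(T (G n))) q μ := by
          rw [hsplit]
          exact eLpNorm_add_le
            (((Lp.aestronglyMeasurable (T f)).sub
              (Lp.aestronglyMeasurable (T (G n)))).indicator (hQmeas i))
            ((Lp.aestronglyMeasurable (T (G n))).indicator (hQmeas i)) hq1
        have hmid : eLpNorm ((Q i).indicator (⇑(T f) - ⇑(T (G n)))) q μ
            ≤ (‖T‖₊ : ℝ≥0∞) * (‖f - G n‖₊ : ℝ≥0∞) := by
          calc eLpNorm ((Q i).indicator (⇑(T f) - ⇑(T (G n)))) q μ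
              ≤ eLpNorm (⇑(T f) - ⇑(T (G n))) q μ := eLpNorm_indicator_le _
            _ = (‖T f - T (G n)‖₊ : ℝ≥0∞) := by
                rw [aux_coe_nnnorm]
                exact (eLpNorm_congr_ae (Lp.coeFn_sub (T f) (T (G n)))).symm
            _ = (‖T (f - G n)‖₊ : ℝ≥0∞) := by rw [map_sub]
            _ ≤ ENNReal.ofNNReal (‖T‖₊ * ‖f - G n‖₊) := ENNReal.coe_le_coe.mpr (T.le_opNNNorm _)
            _ = (‖T‖₊ : ℝ≥0∞) * (‖f - G n‖₊ : ℝ≥0∞) := by rw [ENNReal.coe_mul]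
        exact htri.trans (add_le_add hmid (hTGn i n))
      have hlim : Filter.Tendsto (fun n => (‖T‖₊ : ℝ≥0∞) * (‖f - G n‖₊ : ℝ≥0∞) + M i)
          Filter.atTop (nhds ((‖T‖₊ : ℝ≥0∞) * 0 + M i)) :=
        (ENNReal.Tendsto.const_mul heps (Or.inr ENNReal.coe_ne_top)).add tendsto_const_nhds
      have hfin := ge_of_tendsto hlim (Filter.Eventually.of_forall hstep)
      simpa using hfin
    -- main chain
    have hmulpq : p.toReal * (q.toReal / p.toReal) = q.toReal := by
      field_simp
    have main : (‖T f‖₊ : ℝ≥0∞) ^ q.toReal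
        ≤ B ^ (q.toReal - 1) * (A * (‖f‖₊ : ℝ≥0∞) ^ q.toReal) := by
      have hTf : (‖T f‖₊ : ℝ≥0∞) ^ q.toReal
          = ∑' i, eLpNorm ((Q i).indicator ⇑(T f)) q μ ^ q.toReal := by
        rw [aux_coe_nnnorm]
        exact aux_partition μ Q hQmeas hQdisj hQcover hq0 hq ⇑(T f)
      rw [hTf]
      calc ∑' i, eLpNorm ((Q i).indicator ⇑(T f)) q μ ^ q.toReal
          ≤ ∑' i, (∑' j, N i j * a j) ^ q.toReal :=
            ENNReal.tsum_le_tsum fun i => ENNReal.rpow_le_rpow (hbM i) hqtpos.le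
        _ ≤ ∑' i, ((∑' j, N i j) ^ (q.toReal - 1) * ∑' j, N i j * a j ^ q.toReal) :=
            ENNReal.tsum_le_tsum fun i => aux_holder hqt1 _ _
        _ ≤ ∑' i, (B ^ (q.toReal - 1) * ∑' j, N i j * a j ^ q.toReal) :=
            ENNReal.tsum_le_tsum fun i => mul_le_mul_left
              (ENNReal.rpow_le_rpow (le_iSup _ i) (by linarith)) _
        _ = B ^ (q.toReal - 1) * ∑' i, ∑' j, N i j * a j ^ q.toReal := ENNReal.tsum_mul_left
        _ = B ^ (q.toReal - 1) * ∑' j, ∑' i, N i j * a j ^ q.toReal := by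
            rw [ENNReal.tsum_comm]
        _ = B ^ (q.toReal - 1) * ∑' j, (∑' i, N i j) * a j ^ q.toReal := by
            congr 1
            exact tsum_congr fun j => ENNReal.tsum_mul_right
        _ ≤ B ^ (q.toReal - 1) * ∑' j, A * a j ^ q.toReal :=
            mul_le_mul_right
              (ENNReal.tsum_le_tsum fun j => mul_le_mul_left (le_iSup _ j) _) _
        _ = B ^ (q.toReal - 1) * (A * ∑' j, a j ^ q.toReal) := by rw [ENNReal.tsum_mul_left]
        _ ≤ B ^ (q.toReal - 1) * (A * (‖f‖₊ : ℝ≥0∞) ^ q.toReal) := by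
            refine mul_le_mul_right (mul_le_mul_right ?_ _) _
            have h2 : (1:ℝ) ≤ q.toReal / p.toReal := (one_le_div hptpos).mpr hpqt
            calc ∑' j, a j ^ q.toReal
                = ∑' j, (a j ^ p.toReal) ^ (q.toReal / p.toReal) := by
                  refine tsum_congr fun j => ?_
                  rw [← ENNReal.rpow_mul, hmulpq]
              _ ≤ (∑' j, a j ^ p.toReal) ^ (q.toReal / p.toReal) := aux_lp_mono h2 _
              _ = ((‖f‖₊ : ℝ≥0∞) ^ p.toReal) ^ (q.toReal / p.toReal) := by rw [hfa]
              _ = (‖f‖₊ : ℝ≥0∞) ^ q.toReal := by rw [← ENNReal.rpow_mul, hmulpq]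
    have hfinpow : (‖T f‖₊ : ℝ≥0∞) ^ q.toReal ≤ ((A + B) * (‖f‖₊ : ℝ≥0∞)) ^ q.toReal := by
      refine main.trans ?_
      rw [ENNReal.mul_rpow_of_nonneg _ _ hqtpos.le]
      calc B ^ (q.toReal - 1) * (A * (‖f‖₊ : ℝ≥0∞) ^ q.toReal)
          ≤ (A + B) ^ (q.toReal - 1) * ((A + B) * (‖f‖₊ : ℝ≥0∞) ^ q.toReal) :=
            mul_le_mul' (ENNReal.rpow_le_rpow le_add_self (by linarith))
              (mul_le_mul_left le_self_add _)
        _ = (A + B) ^ q.toReal * (‖f‖₊ : ℝ≥0∞) ^ q.toReal := by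
            rw [← mul_assoc, aux_rpow_sub_one_mul hqt1]
    exact (ENNReal.rpow_le_rpow_iff hqtpos).mp hfinpow
  have hbound : ‖T‖₊ ≤ (A + B).toNNReal := by
    refine ContinuousLinearMap.opNNNorm_le_bound _ _ fun f => ?_
    rw [← ENNReal.coe_le_coe, ENNReal.coe_mul, ENNReal.coe_toNNReal hAB]
    exact core f
  calc (‖T‖₊ : ℝ≥0∞) ≤ ((A + B).toNNReal : ℝ≥0∞) := ENNReal.coe_le_coe.mpr hbound
    _ = A + B := ENNReal.coe_toNNReal hAB
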